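/- Define U(α) = u(ã, α) − u(g*(α), α) for α with g*(α) > ã. Then U'(α) = G'(α)·(g*(α) − ã), so U is nondecreasing on any interval where g*(α) > ã. -/

import Mathlib

/-- with U(α) = u(ã, α) − u(g*(α), α) for α with g*(α) > ã,
U'(α) = G'(α)·(g*(α) − ã); hence U is nondecreasing on any interval where
g*(α) > ã. -/
theorem U_deriv_and_monotone (s i r a k atil c : ℝ) (hs : 0 ≤ s) (hi : 0 < i)
    (hr : 0 < r) (ha : 0 < a) (ha1 : a ≤ 1) (hk : 0 < k) (hc : 0 < c)
    (hat : atil ∈ Set.Ioo (0:ℝ) 1) (G gstar : ℝ → ℝ)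
    (hG : ∀ α, G α = k * α * i / (α * s + α * i + a * r))
    (hgstar : ∀ α, gstar α = 1 / (1 + G α))
    (u : ℝ → ℝ → ℝ)
    (hu : ∀ α am, u α am =
      Real.log α - α + 1 - (if atil < α then c else 0) - α * G am)
    (U : ℝ → ℝ) (hU : ∀ α, U α = u atil α - u (gstar α) α) :
    (∀ α ∈ Set.Ioo (0:ℝ) 1, atil < gstar α →
        deriv U α = deriv G α * (gstar α - atil)) ∧
    (∀ x ∈ Set.Ioc (0:ℝ) 1, ∀ y ∈ Set.Ioc (0:ℝ) 1, x ≤ y →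
        (∀ z ∈ Set.Icc x y, atil < gstar z) → U x ≤ U y) := by
  have hD : ∀ z : ℝ, 0 < z → 0 < z * s + z * i + a * r := by
    intro z hz
    have h1 : 0 ≤ z * s := mul_nonneg hz.le hs
    have h2 : 0 < z * i := mul_pos hz hi
    have h3 : 0 < a * r := mul_pos ha hr
    linarith
  have hGnn : ∀ z : ℝ, 0 < z → 0 ≤ G z := by
    intro z hz; rw [hG]
    exact div_nonneg (by positivity) (hD z hz).le
  have hUeq : ∀ z : ℝ, 0 < z → atil < gstar z →
      U z = (Real.log atil - atil + 1 + c) + Real.log (1 + G z) - atil * G z := by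
    intro z hz hgz
    have h1 : (0:ℝ) < 1 + G z := by have := hGnn z hz; linarith
    rw [hU, hu, hu, if_neg (lt_irrefl atil), if_pos hgz, hgstar]
    rw [one_div, Real.log_inv]
    field_simp
    ring
  constructor
  · intro α hα hgα
    obtain ⟨hα0, hα1⟩ := hα
    have hDα := hD α hα0
    have h1G : (0:ℝ) < 1 + G α := by have := hGnn α hα0; linarith
    have hGd : HasDerivAt G (deriv G α) α := by
      have hdiff : DifferentiableAt ℝ G α := by
        have hfun : G = fun z => k * z * i / (z * s + z * i + a * r) := funext hG
        rw [hfun]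
        exact DifferentiableAt.div (by fun_prop) (by fun_prop) hDα.ne'
      exact hdiff.hasDerivAt
    have hgc : ContinuousAt gstar α := by
      have hfun : gstar = fun z => 1 / (1 + G z) := funext hgstar
      rw [hfun]
      exact continuousAt_const.div (continuousAt_const.add hGd.continuousAt) h1G.ne'
    have h1 : ∀ᶠ z in nhds α, gstar z ∈ Set.Ioi atil :=
      hgc.eventually_mem (isOpen_Ioi.mem_nhds hgα)
    have h2 : ∀ᶠ z in nhds α, 0 < z := eventually_gt_nhds hα0
    have hev : U =ᶠ[nhds α] fun z =>
        (Real.log atil - atil + 1 + c) + Real.log (1 + G z) - atil * G z :=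
      (h1.and h2).mono fun z hz => hUeq z hz.2 hz.1
    have hlog : HasDerivAt (fun z => Real.log (1 + G z)) ((1 + G α)⁻¹ * deriv G α) α := by
      have := (Real.hasDerivAt_log h1G.ne').comp α (hGd.const_add 1)
      exact this
    have hVd : HasDerivAt (fun z =>
        (Real.log atil - atil + 1 + c) + Real.log (1 + G z) - atil * G z)
        ((1 + G α)⁻¹ * deriv G α - atil * deriv G α) α :=
      (hlog.const_add _).sub (hGd.const_mul atil)
    rw [hev.deriv_eq, hVd.deriv, hgstar, one_div]
    ring
  · intro x hx y hy hxy hall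
    have hx0 := hx.1
    have hy0 := hy.1
    have hgx := hall x ⟨le_refl x, hxy⟩
    have hgy := hall y ⟨hxy, le_refl y⟩
    have hUx := hUeq x hx0 hgx
    have hUy := hUeq y hy0 hgy
    have hDx := hD x hx0
    have hDy := hD y hy0
    have hGle : G x ≤ G y := by
      rw [hG, hG, div_le_div_iff₀ hDx hDy]
      nlinarith [mul_nonneg (mul_nonneg (mul_nonneg hk.le hi.le)
        (mul_nonneg ha.le hr.le)) (sub_nonneg.2 hxy)]
    have h1x : (0:ℝ) < 1 + G x := by have := hGnn x hx0; linarith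
    have h1y : (0:ℝ) < 1 + G y := by have := hGnn y hy0; linarith
    have hlog : Real.log (1 + G x) - Real.log (1 + G y) ≤ (G x - G y) / (1 + G y) := by
      have ht : (0:ℝ) < (1 + G x) / (1 + G y) := div_pos h1x h1y
      have hle := Real.log_le_sub_one_of_pos ht
      rw [Real.log_div h1x.ne' h1y.ne'] at hle
      have heq : (1 + G x) / (1 + G y) - 1 = (G x - G y) / (1 + G y) := by
        field_simp
        ring
      rw [heq] at hle
      exact hle
    have hkey : atil * (1 + G y) < 1 := by
      have hgy' : atil < 1 / (1 + G y) := by rw [hgstar] at hgy; exact hgy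
      exact (lt_div_iff₀ h1y).mp hgy'
    have hdiv : (G x - G y) / (1 + G y) ≤ atil * (G x - G y) := by
      rw [div_le_iff₀ h1y]
      nlinarith [mul_nonneg (sub_nonneg.2 hGle) (sub_nonneg.2 hkey.le)]
    rw [hUx, hUy]
    linarith
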